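/- For every N ≥ 1 and all points x_1, …, x_N ∈ ℂ, the determinant of the N × N matrix (K_N(x_i, x_j))_{1 ≤ i,j ≤ N} built from the truncated Ginibre kernel equals e^{−(|x_1|² + ⋯ + |x_N|²)} · ∏_{1 ≤ i < j ≤ N} |x_i − x_j|² / ∏_{k=0}^{N−1} (π·k!); in particular this determinant vanishes exactly when two of the points coincide. -/

import Mathlib

open ComplexConjugate
open Matrix

/-- The functions `φ_k(x) = (1/√(π·k!))·e^{−|x|²/2}·x^k`. -/
noncomputable def phi (k : ℕ) (x : ℂ) : ℂ :=
  ((1 / Real.sqrt (Real.pi * k.factorial) : ℝ) : ℂ) *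
    ((Real.exp (-(‖x‖) ^ 2 / 2) : ℝ) : ℂ) * x ^ k

/-- The truncated Ginibre kernel of rank `N`:
`K_N(x,y) = ∑_{k=0}^{N−1} φ_k(x)·conj(φ_k(y))`. -/
noncomputable def ginibreKN (N : ℕ) (x y : ℂ) : ℂ :=
  ∑ k ∈ Finset.range N, phi k x * conj (phi k y)

/-- For every `N ≥ 1` and all points `x_1, …, x_N : ℂ`, the determinant of the matrix
`(K_N(x_i, x_j))` built from the truncated Ginibre kernel equals
`e^{−(|x_1|² + ⋯ + |x_N|²)} · ∏_{i<j} |x_i − x_j|² / ∏_{k=0}^{N−1} (π·k!)`;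
in particular the determinant vanishes exactly when two of the points coincide. -/
theorem ginibre_truncated_det (N : ℕ) (hN : 1 ≤ N) (x : Fin N → ℂ) :
    (Matrix.of fun i j : Fin N => ginibreKN N (x i) (x j)).det =
        ((Real.exp (-(∑ i, (‖x i‖) ^ 2)) *
            (∏ i, ∏ j ∈ Finset.Ioi i, (‖x i - x j‖) ^ 2) /
            ∏ k ∈ Finset.range N, (Real.pi * k.factorial) : ℝ) : ℂ) ∧
      ((Matrix.of fun i j : Fin N => ginibreKN N (x i) (x j)).det = 0 ↔
        ∃ i j : Fin N, i ≠ j ∧ x i = x j) := by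
  classical
  set c : ℕ → ℝ := fun k => 1 / Real.sqrt (Real.pi * k.factorial) with hc
  set e : Fin N → ℝ := fun i => Real.exp (-(‖x i‖) ^ 2 / 2) with he
  set A : Matrix (Fin N) (Fin N) ℂ := Matrix.of fun i k => phi k (x i) with hA
  have hAfact : A = Matrix.diagonal (fun i => (e i : ℂ)) * Matrix.vandermonde x *
      Matrix.diagonal (fun k : Fin N => (c (k : ℕ) : ℂ)) := by
    ext i k
    simp [A, Matrix.mul_apply, Matrix.diagonal_apply, Matrix.vandermonde, phi, c, e,
      Finset.mul_sum, Finset.sum_ite_eq, Finset.sum_ite_eq']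
    ring
  have hdetA : A.det = (∏ i, (e i : ℂ)) * (∏ i, ∏ j ∈ Finset.Ioi i, (x j - x i)) *
      ∏ k : Fin N, (c (k : ℕ) : ℂ) := by
    rw [hAfact, Matrix.det_mul, Matrix.det_mul, Matrix.det_diagonal,
      Matrix.det_diagonal, Matrix.det_vandermonde]
  have hMA : (Matrix.of fun i j : Fin N => ginibreKN N (x i) (x j)) = A * Aᴴ := by
    ext i j
    simp only [Matrix.of_apply, Matrix.mul_apply, Matrix.conjTranspose_apply, hA,
      ginibreKN]
    rw [← Fin.sum_univ_eq_sum_range (fun k => phi k (x i) * conj (phi k (x j)))]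
    rfl
  have hdet : (Matrix.of fun i j : Fin N => ginibreKN N (x i) (x j)).det =
      ((Complex.normSq A.det : ℝ) : ℂ) := by
    rw [hMA, Matrix.det_mul, Matrix.det_conjTranspose, Complex.star_def, Complex.mul_conj]
  have hnorm : Complex.normSq A.det =
      Real.exp (-(∑ i, (‖x i‖) ^ 2)) *
      (∏ i, ∏ j ∈ Finset.Ioi i, (‖x i - x j‖) ^ 2) /
      ∏ k ∈ Finset.range N, (Real.pi * k.factorial) := by
    rw [hdetA]
    simp only [_root_.map_mul, map_prod, Complex.normSq_ofReal]
    have h1 : (∏ i, e i * e i) = Real.exp (-(∑ i, (‖x i‖) ^ 2)) := by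
      have : ∀ i : Fin N, e i * e i = Real.exp (-(‖x i‖) ^ 2) := by
        intro i
        rw [he, ← Real.exp_add]
        ring_nf
      rw [Finset.prod_congr rfl fun i _ => this i, ← Real.exp_sum, ← Finset.sum_neg_distrib]
    have h2 : (∏ i, ∏ j ∈ Finset.Ioi i, Complex.normSq (x j - x i)) =
        ∏ i, ∏ j ∈ Finset.Ioi i, (‖x i - x j‖) ^ 2 := by
      refine Finset.prod_congr rfl fun i _ => Finset.prod_congr rfl fun j _ => ?_
      rw [← Complex.sq_norm, norm_sub_rev]
    have h3 : (∏ k : Fin N, (c (k : ℕ) * c (k : ℕ))) =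
        1 / ∏ k ∈ Finset.range N, (Real.pi * k.factorial) := by
      have hck : ∀ k : ℕ, c k * c k = (Real.pi * k.factorial)⁻¹ := by
        intro k
        rw [hc]
        have hpos : (0:ℝ) ≤ Real.pi * k.factorial := by positivity
        rw [div_mul_div_comm, one_mul, Real.mul_self_sqrt hpos, one_div]
      have heq : (∏ k : Fin N, (c (k : ℕ) * c (k : ℕ))) =
          ∏ k : Fin N, (Real.pi * (k : ℕ).factorial)⁻¹ :=
        Finset.prod_congr rfl fun k _ => hck (k : ℕ)
      rw [heq, ← Fin.prod_univ_eq_prod_range (fun k => Real.pi * k.factorial), one_div,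
        ← Finset.prod_inv_distrib]
    rw [h1, h2, h3]
    ring
  have hpos : (0:ℝ) < ∏ k ∈ Finset.range N, (Real.pi * k.factorial) := by
    apply Finset.prod_pos
    intro k _
    positivity
  refine ⟨by rw [hdet, hnorm], ?_⟩
  rw [hdet, hnorm, Complex.ofReal_eq_zero, div_eq_zero_iff, or_iff_left hpos.ne',
    mul_eq_zero, or_iff_right (Real.exp_ne_zero _), Finset.prod_eq_zero_iff]
  constructor
  · rintro ⟨i, _, h⟩
    rw [Finset.prod_eq_zero_iff] at h
    obtain ⟨j, hj, h⟩ := h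
    refine ⟨i, j, (Finset.mem_Ioi.mp hj).ne, ?_⟩
    have := pow_eq_zero_iff (n := 2) (by norm_num) |>.mp h
    exact sub_eq_zero.mp (norm_eq_zero.mp this)
  · rintro ⟨i, j, hij, hx⟩
    rcases hij.lt_or_gt with h | h
    · refine ⟨i, Finset.mem_univ i, Finset.prod_eq_zero (Finset.mem_Ioi.mpr h) ?_⟩
      rw [hx, sub_self]
      simp
    · refine ⟨j, Finset.mem_univ j, Finset.prod_eq_zero (Finset.mem_Ioi.mpr h) ?_⟩
      rw [hx, sub_self]
      simp
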